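/- For every μ ∈ (0,1) and σ² > 0, the Simplex density integrates to one on the unit interval: ∫₀¹ (2πσ² [y(1−y)]³)^(−1/2) · exp(−d(y;μ)/(2σ²)) dy = 1. -/

import Mathlib

open MeasureTheory Real Set

/-- Unit deviance of the Simplex distribution. -/
noncomputable def simplexDev (y μ : ℝ) : ℝ :=
  (y - μ) ^ 2 / (y * (1 - y) * μ ^ 2 * (1 - μ) ^ 2)

/-- Density of the Simplex distribution. -/
noncomputable def simplexPdf (μ σ2 y : ℝ) : ℝ :=
  (2 * π * σ2 * (y * (1 - y)) ^ 3) ^ (-(1/2 : ℝ)) * Real.exp (-simplexDev y μ / (2 * σ2))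

namespace SimplexAux

/-- The exponential factor in the transformed (odds-ratio) coordinates. -/
noncomputable def sE (μ σ2 s : ℝ) : ℝ :=
  Real.exp (-((s - μ/(1-μ))^2 / (2*σ2*μ^2*s)))

variable {μ σ2 : ℝ}

lemma m_pos (hμ0 : 0 < μ) (hμ1 : μ < 1) : 0 < μ/(1-μ) := div_pos hμ0 (by linarith)

/-- image of `y ↦ y/(1-y)` -/
lemma image_odds : (fun y : ℝ => y/(1-y)) '' Ioo 0 1 = Ioi 0 := by
  ext s
  simp only [mem_image, mem_Ioo, mem_Ioi]
  constructor
  · rintro ⟨y, ⟨hy0, hy1⟩, rfl⟩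
    have : (0:ℝ) < 1 - y := by linarith
    positivity
  · intro hs
    refine ⟨s/(1+s), ⟨by positivity, ?_⟩, ?_⟩
    · rw [div_lt_one (by linarith)]; linarith
    · have h1 : 1 - s/(1+s) = 1/(1+s) := by field_simp; ring
      rw [h1]; field_simp

lemma deriv_odds : ∀ y ∈ Ioo (0:ℝ) 1,
    HasDerivWithinAt (fun y : ℝ => y/(1-y)) (((1-y)^2)⁻¹) (Ioo 0 1) y := by
  intro y hy
  have h1 : (1:ℝ) - y ≠ 0 := by simp only [mem_Ioo] at hy; intro h; linarith [hy.2]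
  have := ((hasDerivAt_id y).div ((hasDerivAt_id y).const_sub 1) h1)
  refine this.hasDerivWithinAt.congr_deriv ?_
  simp only [id]
  field_simp
  ring

lemma inj_odds : InjOn (fun y : ℝ => y/(1-y)) (Ioo 0 1) := by
  intro a ha b hb h
  simp only [mem_Ioo] at ha hb
  have h1 : (1:ℝ) - a ≠ 0 := by intro h; linarith [ha.2]
  have h2 : (1:ℝ) - b ≠ 0 := by intro h; linarith [hb.2]
  field_simp at h
  linarith

/-- image of `u ↦ m²/u` -/
lemma image_inv {m : ℝ} (hm : 0 < m) : (fun u : ℝ => m^2/u) '' Ioi 0 = Ioi 0 := by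
  ext s
  simp only [mem_image, mem_Ioi]
  constructor
  · rintro ⟨u, hu, rfl⟩; positivity
  · intro hs
    exact ⟨m^2/s, by positivity, by field_simp⟩

lemma deriv_inv' (m : ℝ) : ∀ u ∈ Ioi (0:ℝ),
    HasDerivWithinAt (fun u : ℝ => m^2/u) (-(m^2/u^2)) (Ioi 0) u := by
  intro u hu
  have h1 : u ≠ 0 := ne_of_gt hu
  have := (hasDerivAt_inv h1).const_mul (m^2)
  refine this.hasDerivWithinAt.congr_deriv ?_
  all_goals field_simp

lemma inj_inv {m : ℝ} (hm : 0 < m) : InjOn (fun u : ℝ => m^2/u) (Ioi 0) := by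
  intro a ha b hb h
  simp only [mem_Ioi] at ha hb
  field_simp at h
  linarith

/-- derivative of `φ s = (s - m)/(μ √s)` -/
lemma deriv_phi {m : ℝ} (hμ0 : 0 < μ) : ∀ s ∈ Ioi (0:ℝ),
    HasDerivWithinAt (fun s : ℝ => (s - m)/(μ * Real.sqrt s))
      ((s+m)/(2*μ*(s*Real.sqrt s))) (Ioi 0) s := by
  intro s hs
  simp only [mem_Ioi] at hs
  have hs0 : s ≠ 0 := ne_of_gt hs
  have hss : 0 < Real.sqrt s := Real.sqrt_pos.2 hs
  have hden : μ * Real.sqrt s ≠ 0 := by positivity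
  have hsq := (Real.hasDerivAt_sqrt hs0).const_mul μ
  have := ((hasDerivAt_id s).sub_const m).div hsq hden
  refine this.hasDerivWithinAt.congr_deriv ?_
  simp only [id]
  set r := Real.sqrt s with hrdef
  have h2 : s = r * r := (Real.mul_self_sqrt hs.le).symm
  have hr0 : r ≠ 0 := ne_of_gt hss
  rw [h2]
  field_simp
  ring

lemma mono_phi {m : ℝ} (hμ0 : 0 < μ) (hm : 0 < m) :
    StrictMonoOn (fun s : ℝ => (s - m)/(μ * Real.sqrt s)) (Ioi 0) := by
  intro a ha b hb hab
  simp only [mem_Ioi] at ha hb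
  have hsa : 0 < Real.sqrt a := Real.sqrt_pos.2 ha
  have hsb : 0 < Real.sqrt b := Real.sqrt_pos.2 hb
  have hsab : Real.sqrt a < Real.sqrt b := Real.sqrt_lt_sqrt ha.le hab
  have ha2 : a = Real.sqrt a * Real.sqrt a := (Real.mul_self_sqrt ha.le).symm
  have hb2 : b = Real.sqrt b * Real.sqrt b := (Real.mul_self_sqrt hb.le).symm
  simp only
  set α := Real.sqrt a with hα
  set β := Real.sqrt b with hβ
  rw [div_lt_div_iff₀ (by positivity) (by positivity), ha2, hb2]
  nlinarith [mul_pos (mul_pos hμ0 (sub_pos.2 hsab)) (add_pos (mul_pos hsa hsb) hm)]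

lemma image_phi {m : ℝ} (hμ0 : 0 < μ) (hm : 0 < m) :
    (fun s : ℝ => (s - m)/(μ * Real.sqrt s)) '' Ioi 0 = univ := by
  ext t
  simp only [mem_image, mem_Ioi, mem_univ, iff_true]
  set D := Real.sqrt (μ^2*t^2 + 4*m) with hD
  have hD2 : D^2 = μ^2*t^2 + 4*m := Real.sq_sqrt (by positivity)
  have hDgt : |μ*t| < D := by
    rw [← Real.sqrt_sq_eq_abs]
    apply Real.sqrt_lt_sqrt (by positivity)
    nlinarith
  have hr : 0 < (μ*t + D)/2 := by
    rcases abs_lt.1 hDgt with ⟨h1, _⟩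
    linarith
  set r := (μ*t + D)/2 with hrdef
  refine ⟨r^2, by positivity, ?_⟩
  have hsq : Real.sqrt (r^2) = r := Real.sqrt_sq hr.le
  have hkey : r^2 = μ*t*r + m := by
    rw [hrdef]; nlinarith [hD2]
  simp only [hsq]
  rw [hkey]
  field_simp
  ring

lemma sE_inv (hμ0 : 0 < μ) (hμ1 : μ < 1) (hσ : 0 < σ2) {u : ℝ} (hu : 0 < u) :
    sE μ σ2 ((μ/(1-μ))^2/u) = sE μ σ2 u := by
  unfold sE
  congr 1
  have h1 : (1:ℝ) - μ ≠ 0 := by intro h; linarith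
  have h2 : μ ≠ 0 := ne_of_gt hμ0
  have h3 : u ≠ 0 := ne_of_gt hu
  have h4 : σ2 ≠ 0 := ne_of_gt hσ
  field_simp
  ring

lemma sE_phi (hμ0 : 0 < μ) (hσ : 0 < σ2) {s : ℝ} (hs : 0 < s) :
    Real.exp (-((2*σ2)⁻¹ * ((s - μ/(1-μ))/(μ*Real.sqrt s))^2)) = sE μ σ2 s := by
  unfold sE
  congr 1
  have h2 : μ ≠ 0 := ne_of_gt hμ0
  have h4 : σ2 ≠ 0 := ne_of_gt hσ
  have hss : 0 < Real.sqrt s := Real.sqrt_pos.2 hs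
  have h5 : Real.sqrt s ≠ 0 := ne_of_gt hss
  rw [div_pow, mul_pow]
  rw [Real.sq_sqrt hs.le]
  field_simp
  try ring
  try tauto

lemma pdf_eq (hμ0 : 0 < μ) (hμ1 : μ < 1) (hσ : 0 < σ2) {y : ℝ} (hy : y ∈ Ioo (0:ℝ) 1) :
    simplexPdf μ σ2 y = ((1-y)^2)⁻¹ *
      ((Real.sqrt (2*π*σ2))⁻¹ *
        (((y/(1-y)) * Real.sqrt (y/(1-y)))⁻¹ * sE μ σ2 (y/(1-y)) +
         (Real.sqrt (y/(1-y)))⁻¹ * sE μ σ2 (y/(1-y)))) := by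
  obtain ⟨hy0, hy1⟩ := hy
  have h1y : (0:ℝ) < 1 - y := by linarith
  have hμ1' : (0:ℝ) < 1 - μ := by linarith
  have hdev : sE μ σ2 (y/(1-y)) = Real.exp (-simplexDev y μ / (2*σ2)) := by
    unfold sE simplexDev
    congr 1
    have h2 : μ ≠ 0 := ne_of_gt hμ0
    have h4 : σ2 ≠ 0 := ne_of_gt hσ
    have h5 : y ≠ 0 := ne_of_gt hy0
    have h6 : (1:ℝ) - y ≠ 0 := ne_of_gt h1y
    have h7 : (1:ℝ) - μ ≠ 0 := ne_of_gt hμ1'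
    field_simp
    ring
  have hmag : ((1-y)^2)⁻¹ * ((Real.sqrt (2*π*σ2))⁻¹ *
      (((y/(1-y)) * Real.sqrt (y/(1-y)))⁻¹ + (Real.sqrt (y/(1-y)))⁻¹)) =
      (2 * π * σ2 * (y * (1 - y)) ^ 3) ^ (-(1/2 : ℝ)) := by
    have hX : (0:ℝ) < 2*π*σ2*(y*(1-y))^3 := by positivity
    rw [Real.rpow_neg hX.le, ← Real.sqrt_eq_rpow]
    have e1 : Real.sqrt (2*π*σ2*(y*(1-y))^3)
        = Real.sqrt (2*π*σ2) * ((y*(1-y)) * Real.sqrt (y*(1-y))) := by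
      rw [Real.sqrt_mul (by positivity), show (y*(1-y))^3 = (y*(1-y))^2 * (y*(1-y)) by ring,
        Real.sqrt_mul (sq_nonneg _), Real.sqrt_sq (by positivity)]
    rw [e1, Real.sqrt_mul hy0.le, Real.sqrt_div hy0.le]
    set a := Real.sqrt y with hadef
    set b := Real.sqrt (1-y) with hbdef
    have ha : 0 < a := Real.sqrt_pos.2 hy0
    have hb : 0 < b := Real.sqrt_pos.2 h1y
    have hbb : b*b = 1 - y := Real.mul_self_sqrt h1y.le
    have haa : a*a = y := Real.mul_self_sqrt hy0.le
    have hC : (0:ℝ) < Real.sqrt (2*π*σ2) := Real.sqrt_pos.2 (by positivity)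
    rw [← hbb, ← haa]
    have ha' : a ≠ 0 := ne_of_gt ha
    have hb' : b ≠ 0 := ne_of_gt hb
    have hC' : Real.sqrt (2*π*σ2) ≠ 0 := ne_of_gt hC
    have hab : a^2 + b^2 = 1 := by nlinarith [haa, hbb]
    field_simp
    try linear_combination (b^4*a^4*(Real.sqrt 2*Real.sqrt π*Real.sqrt σ2)) * hab
    linarith
  rw [show simplexPdf μ σ2 y = (2*π*σ2*(y*(1-y))^3) ^ (-(1/2:ℝ)) * Real.exp (-simplexDev y μ / (2*σ2)) from rfl,
    ← hmag, ← hdev]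
  ring

end SimplexAux

theorem simplexPdf_integral_eq_one (μ σ2 : ℝ) (hμ : μ ∈ Set.Ioo (0:ℝ) 1) (hσ : 0 < σ2) :
    ∫ y in Set.Ioo (0:ℝ) 1, simplexPdf μ σ2 y = 1 := by
  obtain ⟨hμ0, hμ1⟩ := hμ
  have h1μ : (0:ℝ) < 1 - μ := by linarith
  have hm : 0 < μ/(1-μ) := SimplexAux.m_pos hμ0 hμ1
  have hCpos : (0:ℝ) < Real.sqrt (2*π*σ2) := Real.sqrt_pos.2 (by positivity)
  have hb2 : (0:ℝ) < (2*σ2)⁻¹ := by positivity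
  have hphi_img := SimplexAux.image_phi (μ:=μ) hμ0 hm
  have hphi_deriv := SimplexAux.deriv_phi (μ:=μ) (m := μ/(1-μ)) hμ0
  have hphi_inj := (SimplexAux.mono_phi (μ:=μ) hμ0 hm).injOn
  -- integrability of the substituted gaussian integrand
  have hKint : IntegrableOn (fun s => |(s + μ/(1-μ))/(2*μ*(s*Real.sqrt s))| *
      Real.exp (-((2*σ2)⁻¹ * (((s - μ/(1-μ))/(μ*Real.sqrt s)))^2))) (Ioi 0) := by
    have hg : Integrable (fun t : ℝ => Real.exp (-((2*σ2)⁻¹ * t^2))) := by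
      simpa [neg_mul] using integrable_exp_neg_mul_sq hb2
    have h := (integrableOn_image_iff_integrableOn_abs_deriv_smul measurableSet_Ioi hphi_deriv
      hphi_inj (fun t => Real.exp (-((2*σ2)⁻¹ * t^2)))).1 (by rw [hphi_img]; exact hg.integrableOn)
    simpa [smul_eq_mul] using h
  have hKKeq : EqOn (fun s => |(s + μ/(1-μ))/(2*μ*(s*Real.sqrt s))| *
      Real.exp (-((2*σ2)⁻¹ * (((s - μ/(1-μ))/(μ*Real.sqrt s)))^2)))
      (fun s => ((s + μ/(1-μ))/(2*μ*(s*Real.sqrt s))) * SimplexAux.sE μ σ2 s) (Ioi 0) := by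
    intro s hs
    have hs0 : (0:ℝ) < s := hs
    have hss : 0 < Real.sqrt s := Real.sqrt_pos.2 hs0
    simp only
    rw [abs_of_pos (by positivity), SimplexAux.sE_phi hμ0 hσ hs0]
  have hKKint : IntegrableOn (fun s => ((s + μ/(1-μ))/(2*μ*(s*Real.sqrt s))) *
      SimplexAux.sE μ σ2 s) (Ioi 0) :=
    hKint.congr_fun hKKeq measurableSet_Ioi
  -- continuity of sE
  have hcont_sE : ContinuousOn (SimplexAux.sE μ σ2) (Ioi 0) := by
    unfold SimplexAux.sE
    apply Real.continuous_exp.comp_continuousOn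
    apply ContinuousOn.neg
    apply ContinuousOn.div
    · exact (continuousOn_id.sub continuousOn_const).pow 2
    · exact continuousOn_const.mul continuousOn_id
    · intro s hs
      have : (0:ℝ) < s := hs
      positivity
  have hcont_sqrt : ContinuousOn Real.sqrt (Ioi (0:ℝ)) := Real.continuous_sqrt.continuousOn
  -- integrability of fA
  have hAint : IntegrableOn (fun s => (s*Real.sqrt s)⁻¹ * SimplexAux.sE μ σ2 s) (Ioi 0) := by
    apply Integrable.mono' (hKKint.const_mul (2*μ/(μ/(1-μ))))
    · apply ContinuousOn.aestronglyMeasurable _ measurableSet_Ioi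
      apply ContinuousOn.mul _ hcont_sE
      apply ContinuousOn.inv₀ (continuousOn_id.mul hcont_sqrt)
      intro s hs
      have hs0 : (0:ℝ) < s := hs
      have hss : 0 < Real.sqrt s := Real.sqrt_pos.2 hs0
      exact mul_ne_zero (ne_of_gt hs0) (ne_of_gt hss)
    · filter_upwards [self_mem_ae_restrict measurableSet_Ioi] with s hs
      have hs0 : (0:ℝ) < s := hs
      have hss : 0 < Real.sqrt s := Real.sqrt_pos.2 hs0
      have hsE : 0 < SimplexAux.sE μ σ2 s := Real.exp_pos _
      rw [Real.norm_eq_abs, abs_of_nonneg (by positivity)]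
      have hrw : (2*μ/(μ/(1-μ))) * (((s + μ/(1-μ))/(2*μ*(s*Real.sqrt s))) * SimplexAux.sE μ σ2 s)
          = ((s + μ/(1-μ))/((μ/(1-μ))*(s*Real.sqrt s))) * SimplexAux.sE μ σ2 s := by
        have h1 : μ ≠ 0 := ne_of_gt hμ0
        have h2 : (1:ℝ) - μ ≠ 0 := ne_of_gt h1μ
        have h3 : s ≠ 0 := ne_of_gt hs0
        have h4 : Real.sqrt s ≠ 0 := ne_of_gt hss
        field_simp
      rw [hrw]
      apply mul_le_mul_of_nonneg_right _ hsE.le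
      rw [inv_eq_one_div, div_le_div_iff₀ (by positivity) (by positivity)]
      nlinarith [mul_pos hs0 hss, hm]
  -- integrability of fB
  have hBint : IntegrableOn (fun s => (Real.sqrt s)⁻¹ * SimplexAux.sE μ σ2 s) (Ioi 0) := by
    apply Integrable.mono' (hKKint.const_mul (2*μ))
    · apply ContinuousOn.aestronglyMeasurable _ measurableSet_Ioi
      apply ContinuousOn.mul _ hcont_sE
      apply ContinuousOn.inv₀ hcont_sqrt
      intro s hs
      have hs0 : (0:ℝ) < s := hs
      exact ne_of_gt (Real.sqrt_pos.2 hs0)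
    · filter_upwards [self_mem_ae_restrict measurableSet_Ioi] with s hs
      have hs0 : (0:ℝ) < s := hs
      have hss : 0 < Real.sqrt s := Real.sqrt_pos.2 hs0
      have hsE : 0 < SimplexAux.sE μ σ2 s := Real.exp_pos _
      rw [Real.norm_eq_abs, abs_of_nonneg (by positivity)]
      have hrw : (2*μ) * (((s + μ/(1-μ))/(2*μ*(s*Real.sqrt s))) * SimplexAux.sE μ σ2 s)
          = ((s + μ/(1-μ))/(s*Real.sqrt s)) * SimplexAux.sE μ σ2 s := by
        have h1 : μ ≠ 0 := ne_of_gt hμ0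
        have h3 : s ≠ 0 := ne_of_gt hs0
        have h4 : Real.sqrt s ≠ 0 := ne_of_gt hss
        field_simp
      rw [hrw]
      apply mul_le_mul_of_nonneg_right _ hsE.le
      rw [inv_eq_one_div, div_le_div_iff₀ (by positivity) (by positivity)]
      nlinarith [mul_pos hs0 hss, hm, mul_pos hm hss]
  -- Step 1: change of variables y ↦ y/(1-y)
  have step1 : ∫ y in Set.Ioo (0:ℝ) 1, simplexPdf μ σ2 y
      = ∫ s in Ioi (0:ℝ), (Real.sqrt (2*π*σ2))⁻¹ *
        ((s*Real.sqrt s)⁻¹ * SimplexAux.sE μ σ2 s + (Real.sqrt s)⁻¹ * SimplexAux.sE μ σ2 s) := by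
    rw [← SimplexAux.image_odds,
      integral_image_eq_integral_abs_deriv_smul measurableSet_Ioo SimplexAux.deriv_odds
        SimplexAux.inj_odds]
    apply setIntegral_congr_fun measurableSet_Ioo
    intro y hy
    have h1y : (0:ℝ) < 1 - y := by simp only [mem_Ioo] at hy; linarith [hy.2]
    simp only [smul_eq_mul]
    rw [abs_of_pos (by positivity : (0:ℝ) < ((1-y)^2)⁻¹)]
    exact SimplexAux.pdf_eq hμ0 hμ1 hσ hy
  -- Step 2: symmetry s ↦ m²/s
  have hsym : ∫ s in Ioi (0:ℝ), (Real.sqrt s)⁻¹ * SimplexAux.sE μ σ2 s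
      = (μ/(1-μ)) * ∫ s in Ioi (0:ℝ), (s*Real.sqrt s)⁻¹ * SimplexAux.sE μ σ2 s := by
    have h := integral_image_eq_integral_abs_deriv_smul measurableSet_Ioi
      (SimplexAux.deriv_inv' (μ/(1-μ))) (SimplexAux.inj_inv hm)
      (fun s => (Real.sqrt s)⁻¹ * SimplexAux.sE μ σ2 s)
    rw [SimplexAux.image_inv hm] at h
    rw [h, ← integral_const_mul]
    apply setIntegral_congr_fun measurableSet_Ioi
    intro u hu
    have hu0 : (0:ℝ) < u := hu
    have hus : 0 < Real.sqrt u := Real.sqrt_pos.2 hu0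
    simp only [smul_eq_mul]
    rw [abs_neg, abs_of_pos (by positivity)]
    rw [SimplexAux.sE_inv hμ0 hμ1 hσ hu0]
    have h1 : Real.sqrt ((μ/(1-μ))^2/u) = (μ/(1-μ))/Real.sqrt u := by
      rw [Real.sqrt_div (sq_nonneg _), Real.sqrt_sq hm.le]
    rw [h1]
    set r := Real.sqrt u with hrdef
    have huu : r * r = u := Real.mul_self_sqrt hu0.le
    have h2 : μ/(1-μ) ≠ 0 := ne_of_gt hm
    have h4 : r ≠ 0 := ne_of_gt hus
    rw [← huu]
    field_simp
  -- Step 3: Gaussian integral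
  have hgauss : ∫ s in Ioi (0:ℝ), ((s + μ/(1-μ))/(2*μ*(s*Real.sqrt s))) * SimplexAux.sE μ σ2 s
      = Real.sqrt (2*π*σ2) := by
    have h := integral_image_eq_integral_abs_deriv_smul measurableSet_Ioi hphi_deriv hphi_inj
      (fun t => Real.exp (-((2*σ2)⁻¹ * t^2)))
    rw [hphi_img, setIntegral_univ] at h
    have hg : ∫ t : ℝ, Real.exp (-((2*σ2)⁻¹ * t^2)) = Real.sqrt (2*π*σ2) := by
      rw [show (fun t : ℝ => Real.exp (-((2*σ2)⁻¹ * t^2)))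
          = fun t : ℝ => Real.exp (-(2*σ2)⁻¹ * t^2) from by funext t; rw [neg_mul]]
      rw [integral_gaussian]
      congr 1
      rw [div_inv_eq_mul]
      ring
    rw [← hg, h]
    symm
    apply setIntegral_congr_fun measurableSet_Ioi
    intro s hs
    have hs0 : (0:ℝ) < s := hs
    have hss : 0 < Real.sqrt s := Real.sqrt_pos.2 hs0
    simp only [smul_eq_mul]
    rw [abs_of_pos (by positivity), SimplexAux.sE_phi hμ0 hσ hs0]
  -- Split the Gaussian integrand
  have hsplit : ∫ s in Ioi (0:ℝ), ((s + μ/(1-μ))/(2*μ*(s*Real.sqrt s))) * SimplexAux.sE μ σ2 s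
      = (2*μ)⁻¹ * (∫ s in Ioi (0:ℝ), (Real.sqrt s)⁻¹ * SimplexAux.sE μ σ2 s)
        + ((2*μ)⁻¹ * (μ/(1-μ))) * (∫ s in Ioi (0:ℝ), (s*Real.sqrt s)⁻¹ * SimplexAux.sE μ σ2 s) := by
    rw [← integral_const_mul, ← integral_const_mul,
      ← integral_add (hBint.const_mul _) (hAint.const_mul _)]
    apply setIntegral_congr_fun measurableSet_Ioi
    intro s hs
    have hs0 : (0:ℝ) < s := hs
    have hss : 0 < Real.sqrt s := Real.sqrt_pos.2 hs0
    have huu : Real.sqrt s * Real.sqrt s = s := Real.mul_self_sqrt hs0.le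
    have h1 : μ ≠ 0 := ne_of_gt hμ0
    have h2 : (1:ℝ) - μ ≠ 0 := ne_of_gt h1μ
    have h3 : s ≠ 0 := ne_of_gt hs0
    have h4 : Real.sqrt s ≠ 0 := ne_of_gt hss
    simp only
    field_simp
  -- Solve for A
  have hAval : ∫ s in Ioi (0:ℝ), (s*Real.sqrt s)⁻¹ * SimplexAux.sE μ σ2 s
      = (μ/(μ/(1-μ))) * Real.sqrt (2*π*σ2) := by
    have h := hgauss
    rw [hsplit, hsym] at h
    have h1 : μ ≠ 0 := ne_of_gt hμ0
    have h2 : (1:ℝ) - μ ≠ 0 := ne_of_gt h1μ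
    have h3 : μ/(1-μ) ≠ 0 := ne_of_gt hm
    field_simp at h ⊢
    nlinarith [hμ0, h]
  -- Conclude
  rw [step1]
  have hfinal : ∀ s : ℝ, (Real.sqrt (2*π*σ2))⁻¹ *
      ((s*Real.sqrt s)⁻¹ * SimplexAux.sE μ σ2 s + (Real.sqrt s)⁻¹ * SimplexAux.sE μ σ2 s)
      = (Real.sqrt (2*π*σ2))⁻¹ * ((s*Real.sqrt s)⁻¹ * SimplexAux.sE μ σ2 s)
        + (Real.sqrt (2*π*σ2))⁻¹ * ((Real.sqrt s)⁻¹ * SimplexAux.sE μ σ2 s) := by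
    intro s; ring
  simp only [hfinal]
  rw [integral_add (hAint.const_mul _) (hBint.const_mul _), integral_const_mul, integral_const_mul,
    hsym, hAval]
  have h1 : μ ≠ 0 := ne_of_gt hμ0
  have h2 : (1:ℝ) - μ ≠ 0 := ne_of_gt h1μ
  have h3 : μ/(1-μ) ≠ 0 := ne_of_gt hm
  have h4 : Real.sqrt (2*π*σ2) ≠ 0 := ne_of_gt hCpos
  field_simp
  ring
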